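/- For integers M ≥ 1 and n ≥ 1 with S ≥ 1 and S+n ≤ M, any set of K ≤ n·⌊M/(S+n)⌋ consecutive residues mod M contains at most n elements of the arithmetic progression {1 + j·⌊M/(S+n)⌋ mod M : j = 0,...,S+n−1}. -/

import Mathlib

open scoped Classical in
/-- For `M ≥ 1`, `n ≥ 1`, `S ≥ 1` with `S + n ≤ M` and `q = ⌊M/(S+n)⌋`: any
circular interval `{a, a+1, …, a+K-1}` of length `K ≤ n·q` in `Z/MZ` contains
at most `n` elements of the arithmetic progression
`{1 + j·q mod M : 0 ≤ j ≤ S+n-1}`. -/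
theorem interval_meets_progression (M S n K : ℕ) [NeZero M]
    (hM : 1 ≤ M) (hn : 1 ≤ n) (hS : 1 ≤ S) (hSn : S + n ≤ M)
    (hK : K ≤ n * (M / (S + n))) :
    ∀ a : ZMod M,
      (Finset.univ.filter (fun j : Fin (S + n) =>
        ((((1 + (j : ℕ) * (M / (S + n)) : ℕ) : ZMod M) - a).val < K))).card ≤ n := by
  intro a
  set q := M / (S + n) with hqdef
  have hSn0 : 0 < S + n := by omega
  have hq1 : 1 ≤ q := (Nat.one_le_div_iff hSn0).2 hSn
  have hqM : (S + n) * q ≤ M := by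
    rw [hqdef, mul_comm]; exact Nat.div_mul_le_self M (S + n)
  set v : Fin (S + n) → ℕ :=
    fun j => ((((1 + (j : ℕ) * q : ℕ) : ZMod M)) - a).val with hv
  have hvlt : ∀ j, v j < M := fun j => ZMod.val_lt _
  have key : ∀ j1 j2 : Fin (S + n), (j1 : ℕ) < (j2 : ℕ) →
      (q : ℤ) ≤ |(v j2 : ℤ) - (v j1 : ℤ)| := by
    intro j1 j2 hlt
    set d : ℕ := (j2 : ℕ) - (j1 : ℕ) with hd
    have hd1 : 1 ≤ d := by omega
    have hdq : d * q + q ≤ M := by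
      have hle : d + 1 ≤ S + n := by have := j2.isLt; omega
      calc d * q + q = (d + 1) * q := by ring
        _ ≤ (S + n) * q := Nat.mul_le_mul_right _ hle
        _ ≤ M := hqM
    have hdvd : (M : ℤ) ∣ ((v j2 : ℤ) - (v j1 : ℤ) - (d : ℤ) * q) := by
      have hc : (((v j2 : ℤ) - (v j1 : ℤ) - (d : ℤ) * q : ℤ) : ZMod M) = 0 := by
        have hdz : ((d : ℕ) : ZMod M) = ((j2 : ℕ) : ZMod M) - ((j1 : ℕ) : ZMod M) := by
          have : ((j1 : ℕ) : ℤ) ≤ ((j2 : ℕ) : ℤ) := by exact_mod_cast hlt.le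
          push_cast [hd, Nat.cast_sub hlt.le]; ring
        push_cast [hv, ZMod.natCast_val, ZMod.cast_id, hdz]
        ring
      exact (ZMod.intCast_zmod_eq_zero_iff_dvd _ _).mp hc
    obtain ⟨k, hk⟩ := hdvd
    have hb1 : (0 : ℤ) ≤ v j1 := by positivity
    have hb2 : (0 : ℤ) ≤ v j2 := by positivity
    have hb3 : (v j1 : ℤ) < M := by exact_mod_cast hvlt j1
    have hb4 : (v j2 : ℤ) < M := by exact_mod_cast hvlt j2
    have hb5 : (q : ℤ) ≤ (d : ℤ) * q := by
      have : (1 : ℤ) ≤ d := by exact_mod_cast hd1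
      nlinarith [Int.ofNat_nonneg q]
    have hb6 : (d : ℤ) * q + q ≤ M := by exact_mod_cast hdq
    have hM1 : (1 : ℤ) ≤ M := by exact_mod_cast hM
    have hkrange : k = -1 ∨ k = 0 := by
      have h1 : (M : ℤ) * k < M := by linarith
      have h2 : -(2 * (M : ℤ)) < M * k := by linarith
      have hk1 : k < 1 := by nlinarith
      have hk2 : -2 < k := by nlinarith
      omega
    rcases hkrange with h | h
    · subst h
      refine le_abs.mpr (Or.inr ?_)
      linarith
    · subst h
      refine le_abs.mpr (Or.inl ?_)
      linarith
  have hmain := Finset.card_le_card_of_injOn (f := fun j : Fin (S + n) => v j / q)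
    (s := Finset.univ.filter (fun j : Fin (S + n) => ((((1 + (j : ℕ) * q : ℕ) : ZMod M)) - a).val < K)) (t := Finset.range n)
    (fun j hj => by
      simp only [Finset.mem_coe, Finset.mem_filter] at hj
      have hjK : v j < n * q := lt_of_lt_of_le hj.2 hK
      exact Finset.mem_range.2 (Nat.div_lt_of_lt_mul (by rwa [mul_comm] at hjK)))
    (by
      intro j1 _ j2 _ heq
      by_contra hne
      have hne' : (j1 : ℕ) ≠ (j2 : ℕ) := fun h => hne (Fin.ext h)
      have habs : (q : ℤ) ≤ |(v j2 : ℤ) - (v j1 : ℤ)| := by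
        rcases Nat.lt_or_ge (j1 : ℕ) (j2 : ℕ) with h | h
        · exact key j1 j2 h
        · rw [abs_sub_comm]; exact key j2 j1 (by omega)
      have e2 := Nat.div_add_mod (v j2) q
      have e1 := Nat.div_add_mod (v j1) q
      have heq' : v j1 / q = v j2 / q := heq
      rw [heq'] at e1
      set c := q * (v j2 / q) with hc
      have m1 := Nat.mod_lt (v j1) (show 0 < q by omega)
      have m2 := Nat.mod_lt (v j2) (show 0 < q by omega)
      rcases le_abs.mp habs with h | h <;> omega)
  simpa using hmain
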